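/- Let Γ be a colored tree and let MC(Γ) denote the set of minimally complete subsets of E(Γ). Then the subgroup of ℤ^{MC(Γ)} consisting of all functions of the form Y ↦ ⟨u, v_Y⟩ with u ∈ M equals the subgroup generated by the g functions χ_v, where v ranges over the uncolored vertices of Γ and χ_v(Y) = 1 if Y contains an edge of the subtree rooted at v and χ_v(Y) = 0 otherwise. -/

import Mathlib

noncomputable section
open Classical

/-- A rose tree whose leaves ("colored vertices") carry labels of type `α` and whose
internal vertices ("uncolored vertices") are unlabelled. -/
inductive CTree (α : Type) : Type
  | leaf (a : α) : CTree α
  | node (ts : List (CTree α)) : CTree α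

namespace CTree

variable {α : Type}

/-- The subtree of `t` at a position `p` (a list of child indices), if it exists. -/
def sub : CTree α → List ℕ → Option (CTree α)
  | t, [] => some t
  | leaf _, _ :: _ => none
  | node ts, i :: p =>
      match ts[i]? with
      | some c => sub c p
      | none => none

/-- All lists of natural numbers of length at most `k` with entries `< m`. -/
def allLists (m : ℕ) : ℕ → List (List ℕ)
  | 0 => [[]]
  | k + 1 => [] :: (List.range m).flatMap (fun i => (allLists m k).map (i :: ·))

/-- The finite set of positions of vertices of `t`. -/
def vertS (t : CTree α) : Finset (List ℕ) :=
  (allLists (sizeOf t) (sizeOf t)).toFinset.filter (fun p => (t.sub p).isSome)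

/-- The finite set of positions of uncolored (internal) vertices of `t`. -/
def uncS (t : CTree α) : Finset (List ℕ) :=
  (allLists (sizeOf t) (sizeOf t)).toFinset.filter (fun p => ∃ ts, t.sub p = some (node ts))

/-- The finite set of positions of colored vertices (leaves) of `t`. -/
def colS (t : CTree α) : Finset (List ℕ) :=
  (allLists (sizeOf t) (sizeOf t)).toFinset.filter (fun p => ∃ a, t.sub p = some (leaf a))

/-- Edges of `t` are identified with the positions of non-root vertices (an edge joins
the vertex at `p ≠ []` to its parent at `p.dropLast`). -/
def edgeS (t : CTree α) : Finset (List ℕ) := (vertS t).erase []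

/-- `t` is a colored tree: every internal vertex has at least one child (so the leaves,
i.e. the childless vertices, are exactly the colored vertices) and the root is
uncolored. -/
def IsColoredTree (t : CTree α) : Prop :=
  (∀ p, t.sub p ≠ some (node ([] : List (CTree α)))) ∧ ∃ ts, t = node ts

/-- The weight `w_d ∈ M` of an edge `d`: the sum of the dual basis vectors `e_u^*`
over uncolored vertices `u` that are descendants of the upper endpoint of `d` but not
descendants of the lower endpoint of `d`. -/
def wt (t : CTree α) (d : List ℕ) : List ℕ → ℤ := fun u =>
  if u ∈ uncS t ∧ d.dropLast <+: u ∧ ¬ d <+: u then 1 else 0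

/-- `s_v ∈ M` : the sum of `e_u^*` over the uncolored descendants `u` of `v`;
`s(Γ) = sv t []`. -/
def sv (t : CTree α) (v : List ℕ) : List ℕ → ℤ := fun u =>
  if u ∈ uncS t ∧ v <+: u then 1 else 0

/-- The pairing between `M = Hom(ℤ^g, ℤ)` and `ℤ^g` (both realized as integer-valued
functions on the uncolored vertices of `t`). -/
def pairZ (t : CTree α) (μ x : List ℕ → ℤ) : ℤ := ∑ p ∈ uncS t, μ p * x p

/-- The pairing between `M` and `ℝ^g`. -/
def pairR (t : CTree α) (μ : List ℕ → ℤ) (x : List ℕ → ℝ) : ℝ :=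
  ∑ p ∈ uncS t, (μ p : ℝ) * x p

/-- The multiset of edges of the (downward) path from the vertex `v` to the vertex `c`;
each edge occurs with multiplicity one. -/
def pathEdges (t : CTree α) (v c : List ℕ) : Multiset (List ℕ) :=
  ((edgeS t).filter (fun d => v <+: d ∧ d ≠ v ∧ d <+: c)).val

/-- The relation `A ∼ B` on multisets of edges: `A` and `B` consist exactly of the edges
of two non-self-crossing paths from a common vertex to two colored vertices. -/
def Sim (t : CTree α) (A B : Multiset (List ℕ)) : Prop :=
  ∃ v ∈ vertS t, ∃ c₁ ∈ colS t, ∃ c₂ ∈ colS t, v <+: c₁ ∧ v <+: c₂ ∧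
    A = pathEdges t v c₁ ∧ B = pathEdges t v c₂

/-- `Y` is a minimally complete subset of the set of edges of `t`: every
(non-self-crossing) path from the root to a colored vertex contains exactly one edge
of `Y`. -/
def MinComplete (t : CTree α) (Y : Finset (List ℕ)) : Prop :=
  Y ⊆ edgeS t ∧ ∀ c ∈ colS t, ∃! d, d ∈ Y ∧ d <+: c

/-- The finite set of minimally complete subsets of the edge set of `t`. -/
def MCfin (t : CTree α) : Finset (Finset (List ℕ)) :=
  (edgeS t).powerset.filter (fun Y => MinComplete t Y)

/-- The dual cone `C(Γ) = {x ∈ ℝ^g | ⟨w_d, x⟩ ≥ 0 for all edges d}`. -/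
def dualCone (t : CTree α) : Set (List ℕ → ℝ) :=
  {x | (∀ p, p ∉ uncS t → x p = 0) ∧ ∀ d ∈ edgeS t, 0 ≤ pairR t (wt t d) x}

/-- The ray spanned by a vector `v`. -/
def ray (v : List ℕ → ℝ) : Set (List ℕ → ℝ) := {x | ∃ c : ℝ, 0 ≤ c ∧ x = c • v}

/-- `F` is a one-dimensional face (extreme ray) of the convex cone `C`. -/
def IsOneDimFace (C F : Set (List ℕ → ℝ)) : Prop :=
  F ⊆ C ∧ (∃ v, v ≠ 0 ∧ F = ray v) ∧
    ∀ x ∈ C, ∀ y ∈ C, x + y ∈ F → x ∈ F ∧ y ∈ F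

/-- The convex cone generated by a set `G ⊆ ℤ^g` inside `ℝ^g`: all finite nonnegative
real combinations of elements of `G`. -/
def coneHull (G : Set (List ℕ → ℤ)) : Set (List ℕ → ℝ) :=
  {x | ∃ (F : Finset (List ℕ → ℤ)) (c : (List ℕ → ℤ) → ℝ),
    ↑F ⊆ G ∧ (∀ v ∈ F, 0 ≤ c v) ∧
    x = ∑ v ∈ F, c v • (fun p => ((v p : ℤ) : ℝ))}

/-- `e_{v_0} ∈ ℤ^g`: the basis vector of the root vertex. -/
def e0 : List ℕ → ℤ := fun p => if p = [] then 1 else 0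

/-- The inclusion `ℤ^{g_i} → ℤ^g` corresponding to the `i`-th principal subtree. -/
def shift (i : ℕ) (f : List ℕ → ℤ) : List ℕ → ℤ := fun p =>
  match p with
  | [] => 0
  | j :: q => if j = i then f q else 0

def isNodeB : CTree α → Bool
  | leaf _ => false
  | node _ => true

/-- The recursively defined set `G(Γ) ⊆ ℤ^g`: `G(Γ)` consists of all vectors
`e_{v₀} + ∑_{i ∈ J} (w_i - e_{v₀})` where `J` ranges over subsets of the set of indices
of non-trivial principal subtrees and `w_i ∈ G(Γ_i)` (in particular if `g = 1` this is
just `{e_{v₀}}`). -/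
def Gset : CTree α → Set (List ℕ → ℤ)
  | leaf _ => ∅
  | node ts =>
      {v | ∃ (J : Finset (Fin ts.length)) (w : Fin ts.length → (List ℕ → ℤ)),
        (∀ i ∈ J, (ts.get i).isNodeB = true ∧ w i ∈ Gset (ts.get i)) ∧
        v = e0 + ∑ i ∈ J, (shift i.1 (w i) - e0)}
  termination_by t => sizeOf t
  decreasing_by
    have h1 : ts.get i ∈ ts := List.get_mem ts i
    have h2 := List.sizeOf_lt_of_mem h1
    simp only [CTree.node.sizeOf_spec]
    omega

/-- Transport of a set of edges of `Γ` to the `i`-th principal subtree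
(`Y ∩ E(Γ_i)`, rewritten in the coordinates of `Γ_i`). -/
def sect (i : ℕ) (Y : Finset (List ℕ)) : Finset (List ℕ) :=
  (Y.filter (fun p => p.head? = some i)).image List.tail

/-- The recursively defined vector `v_Y ∈ ℤ^g` attached to a (minimally complete) set
of edges `Y`: `v_Y = e_{v₀} + ∑_{i ∈ I} (v_{Y_i} - e_{v₀})` where
`I = {i | d_i ∉ Y}` and `Y_i = Y ∩ E(Γ_i)` (if `g = 1` this is just `e_{v₀}`). -/
def vY : CTree α → Finset (List ℕ) → (List ℕ → ℤ)
  | leaf _, _ => 0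
  | node ts, Y =>
      e0 + ∑ i ∈ Finset.univ.filter (fun i : Fin ts.length => [i.1] ∉ Y),
        (shift i.1 (vY (ts.get i) (sect i.1 Y)) - e0)
  termination_by t => sizeOf t
  decreasing_by
    have h1 : ts.get i ∈ ts := List.get_mem ts i
    have h2 := List.sizeOf_lt_of_mem h1
    simp only [CTree.node.sizeOf_spec]
    omega

/-- The set of balanced labellings `X(Γ) ⊆ ℂ^{E(Γ)}`. -/
def Xbal (t : CTree α) : Set (List ℕ → ℂ) :=
  {x | ∀ v ∈ uncS t, ∀ c ∈ colS t, ∀ c' ∈ colS t, v <+: c → v <+: c' →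
    ((pathEdges t v c).map x).prod = ((pathEdges t v c').map x).prod}

/-- `Y ⊆ E(Γ)` is complete: for every finite multiset `A` of edges, the monomial
`∏_{d ∈ A} x_d` vanishes identically on `{x ∈ X(Γ) | x_y = 0 ∀ y ∈ Y}` if and only if
`A` contains at least one edge belonging to `Y`. -/
def CompleteSet (t : CTree α) (Y : Finset (List ℕ)) : Prop :=
  ∀ A : Multiset (List ℕ), (∀ d ∈ A, d ∈ edgeS t) →
    ((∀ x ∈ Xbal t, (∀ y ∈ Y, x y = 0) → (A.map x).prod = 0) ↔ ∃ d ∈ A, d ∈ Y)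

/-- A partition of a type `I`: a finite collection of nonempty pairwise disjoint
subsets covering `I`. -/
def IsPart {I : Type} (P : Finset (Finset I)) : Prop :=
  (∀ S ∈ P, S ≠ ∅) ∧ ∀ a : I, ∃! S, S ∈ P ∧ a ∈ S

/-- The tree with a single uncolored vertex whose children are the colored vertices
labelled by the elements of `S`. -/
def blockTree {I : Type} (S : Finset I) : CTree I := node (S.toList.map leaf)

/-- The colored tree `Γ_P` of a partition `P`: the root has one child for each block
`S ∈ P`, an uncolored vertex whose children are colored vertices labelled by the
elements of `S`. -/
def gammaP {I : Type} (P : Finset (Finset I)) : CTree I := node (P.toList.map blockTree)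

/-- A tree homomorphism `t → t'`, described by a map `f` on vertex positions: it sends
root to root, vertices to vertices, the two endpoints of any edge to the two endpoints
of an edge, and restricts to a label-preserving bijection between the colored
vertices. -/
def TreeHom {I : Type} (t t' : CTree I) (f : List ℕ → List ℕ) : Prop :=
  f [] = [] ∧
  (∀ p ∈ vertS t, f p ∈ vertS t') ∧
  (∀ p ∈ vertS t, p ≠ [] →
    (f p ≠ [] ∧ (f p).dropLast = f p.dropLast) ∨
    (f p.dropLast ≠ [] ∧ (f p.dropLast).dropLast = f p)) ∧
  (∀ p a, t.sub p = some (leaf a) → t'.sub (f p) = some (leaf a)) ∧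
  Set.BijOn f {p | ∃ a, t.sub p = some (leaf a)} {q | ∃ a, t'.sub q = some (leaf a)}

/-- A partition `P` of the label set is compatible with the colored tree `t` if there
exists a tree homomorphism `t → Γ_P`. -/
def Compatible {I : Type} (t : CTree I) (P : Finset (Finset I)) : Prop :=
  ∃ f, TreeHom t (gammaP P) f

/-- `C_y ⊆ I` : the labels of the colored vertices whose path from the root contains
the edge `y`. -/
def Cy {I : Type} [Fintype I] [DecidableEq I] (t : CTree I) (y : List ℕ) : Finset I :=
  Finset.univ.filter (fun a => ∃ p, t.sub p = some (leaf a) ∧ y <+: p)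

/-! ### Auxiliary lemmas -/

section Aux

lemma mem_allLists {m k : ℕ} {p : List ℕ} :
    p ∈ allLists m k ↔ p.length ≤ k ∧ ∀ x ∈ p, x < m := by
  induction k generalizing p with
  | zero =>
      simp only [allLists, List.mem_singleton]
      constructor
      · rintro rfl; simp
      · rintro ⟨h1, _⟩; exact List.eq_nil_of_length_eq_zero (Nat.le_zero.mp h1)
  | succ k ih =>
      simp only [allLists, List.mem_cons, List.mem_flatMap, List.mem_map, List.mem_range]
      constructor
      · rintro (rfl | ⟨i, hi, q, hq, rfl⟩)
        · simp
        · obtain ⟨h1, h2⟩ := ih.mp hq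
          refine ⟨by simpa using Nat.succ_le_succ h1, ?_⟩
          intro x hx
          rcases List.mem_cons.mp hx with rfl | hx
          · exact hi
          · exact h2 x hx
      · rintro ⟨h1, h2⟩
        cases p with
        | nil => exact Or.inl rfl
        | cons i q =>
            refine Or.inr ⟨i, h2 i (by simp), q, ih.mpr ⟨?_, ?_⟩, rfl⟩
            · simpa using Nat.le_of_succ_le_succ h1
            · intro x hx; exact h2 x (List.mem_cons_of_mem _ hx)

lemma one_le_sizeOf (t : CTree α) : 1 ≤ sizeOf t := by
  cases t <;> simp <;> omega

lemma length_lt_sizeOf_list (l : List (CTree α)) : l.length < sizeOf l := by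
  induction l with
  | nil => simp
  | cons a l ih =>
      have := one_le_sizeOf a
      simp only [List.length_cons, List.cons.sizeOf_spec]
      omega

lemma sub_isSome_bounds : ∀ (p : List ℕ) (t : CTree α), (t.sub p).isSome →
    p.length < sizeOf t ∧ ∀ x ∈ p, x < sizeOf t := by
  intro p
  induction p with
  | nil =>
      intro t _
      exact ⟨one_le_sizeOf t, by simp⟩
  | cons i q ih =>
      intro t h
      cases t with
      | leaf a => simp [sub] at h
      | node ts =>
          simp only [sub] at h
          rcases hc : ts[i]? with _ | c
          · rw [hc] at h; simp at h
          · rw [hc] at h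
            have hi : i < ts.length := by
              by_contra hcon
              rw [List.getElem?_eq_none (by omega)] at hc
              cases hc
            have hmem : c ∈ ts := by
              have := List.getElem?_eq_some_iff.mp hc
              obtain ⟨h', rfl⟩ := this
              exact List.getElem_mem _
            have hsz : sizeOf c < sizeOf (node ts) := by
              have := List.sizeOf_lt_of_mem hmem
              simp only [CTree.node.sizeOf_spec]
              omega
            have hlen : ts.length < sizeOf (node ts) := by
              have := length_lt_sizeOf_list ts
              simp only [CTree.node.sizeOf_spec]
              omega
            obtain ⟨h1, h2⟩ := ih c h
            constructor
            · simp only [List.length_cons]; omega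
            · intro x hx
              rcases List.mem_cons.mp hx with rfl | hx
              · omega
              · have := h2 x hx; omega

lemma sub_isSome_mem_allLists {p : List ℕ} {t : CTree α} (h : (t.sub p).isSome) :
    p ∈ allLists (sizeOf t) (sizeOf t) := by
  obtain ⟨h1, h2⟩ := sub_isSome_bounds p t h
  exact mem_allLists.mpr ⟨le_of_lt h1, h2⟩

lemma mem_vertS {t : CTree α} {p : List ℕ} : p ∈ vertS t ↔ (t.sub p).isSome := by
  unfold vertS
  simp only [Finset.mem_filter, List.mem_toFinset]
  exact ⟨fun h => h.2, fun h => ⟨sub_isSome_mem_allLists h, h⟩⟩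

lemma mem_uncS {t : CTree α} {p : List ℕ} :
    p ∈ uncS t ↔ ∃ ts, t.sub p = some (node ts) := by
  unfold uncS
  simp only [Finset.mem_filter, List.mem_toFinset]
  refine ⟨fun h => h.2, fun h => ⟨?_, h⟩⟩
  obtain ⟨ts, hts⟩ := h
  exact sub_isSome_mem_allLists (by simp [hts])

lemma mem_colS {t : CTree α} {p : List ℕ} :
    p ∈ colS t ↔ ∃ a, t.sub p = some (leaf a) := by
  unfold colS
  simp only [Finset.mem_filter, List.mem_toFinset]
  refine ⟨fun h => h.2, fun h => ⟨?_, h⟩⟩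
  obtain ⟨a, ha⟩ := h
  exact sub_isSome_mem_allLists (by simp [ha])

lemma mem_edgeS {t : CTree α} {p : List ℕ} :
    p ∈ edgeS t ↔ p ≠ [] ∧ (t.sub p).isSome := by
  unfold edgeS
  rw [Finset.mem_erase, mem_vertS]

lemma sub_append (p q : List ℕ) (t : CTree α) :
    t.sub (p ++ q) = (t.sub p).bind (fun s => s.sub q) := by
  induction p generalizing t with
  | nil => simp [sub]
  | cons i p' ih =>
      cases t with
      | leaf a => simp [sub]
      | node ts =>
          simp only [List.cons_append, sub]
          rcases hc : ts[i]? with _ | c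
          · simp
          · exact ih c

lemma sub_isSome_of_prefix {p r : List ℕ} {t : CTree α} (hpr : p <+: r)
    (h : (t.sub r).isSome) : (t.sub p).isSome := by
  obtain ⟨q, rfl⟩ := hpr
  rw [sub_append] at h
  rcases hs : t.sub p with _ | s
  · rw [hs] at h; simp at h
  · simp

lemma sub_cons {ts : List (CTree α)} {j : ℕ} {c : CTree α} (hc : ts[j]? = some c)
    (q : List ℕ) : (node ts).sub (j :: q) = c.sub q := by
  simp only [sub, hc]

lemma length_lt_of_proper_prefix {a b : List ℕ} (h : a <+: b) (hne : a ≠ b) :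
    a.length < b.length := by
  rcases h with ⟨q, rfl⟩
  cases q with
  | nil => simp at hne
  | cons x l => simp

lemma prefix_dropLast_of_proper {a b : List ℕ} (h : a <+: b) (hne : a ≠ b) :
    a <+: b.dropLast := by
  have hb : b ≠ [] := by
    rintro rfl
    simp only [List.prefix_nil] at h
    exact hne h
  have h1 : a.length ≤ b.dropLast.length := by
    rw [List.length_dropLast]
    have := length_lt_of_proper_prefix h hne
    omega
  exact List.prefix_of_prefix_length_le h (List.dropLast_prefix b) h1

lemma parent_mem_uncS {t : CTree α} {p : List ℕ} (hp : p ∈ uncS t) (hne : p ≠ []) :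
    p.dropLast ∈ uncS t := by
  obtain ⟨ts, hts⟩ := mem_uncS.mp hp
  have hsplit : p.dropLast ++ [p.getLast hne] = p := List.dropLast_append_getLast hne
  rw [← hsplit, sub_append] at hts
  rcases hs : t.sub p.dropLast with _ | s
  · rw [hs] at hts; simp at hts
  · rw [hs] at hts
    simp only [Option.bind_some] at hts
    cases s with
    | leaf a => simp [sub] at hts
    | node us => exact mem_uncS.mpr ⟨us, hs⟩

lemma exists_colS_prefix_aux : ∀ (n : ℕ) (s t : CTree α) (p : List ℕ),
    sizeOf s ≤ n → (∀ r, t.sub r ≠ some (node ([] : List (CTree α)))) →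
    t.sub p = some s → ∃ c ∈ colS t, p <+: c := by
  intro n
  induction n with
  | zero => intro s t p hs; have := one_le_sizeOf s; omega
  | succ n ih =>
      intro s t p hs ht hsub
      cases s with
      | leaf a => exact ⟨p, mem_colS.mpr ⟨a, hsub⟩, List.prefix_refl p⟩
      | node us =>
          have hus : us ≠ [] := by
            rintro rfl; exact ht p hsub
          obtain ⟨u0, hu0⟩ : ∃ u0, us[0]? = some u0 := by
            cases us with
            | nil => exact absurd rfl hus
            | cons a l => exact ⟨a, by simp⟩
          have hsub0 : t.sub (p ++ [0]) = some u0 := by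
            rw [sub_append, hsub]
            simp only [Option.bind_some]
            rw [sub_cons hu0]
            simp [sub]
          have hsz : sizeOf u0 ≤ n := by
            have hmem : u0 ∈ us := by
              obtain ⟨h', rfl⟩ := List.getElem?_eq_some_iff.mp hu0
              exact List.getElem_mem _
            have := List.sizeOf_lt_of_mem hmem
            simp only [CTree.node.sizeOf_spec] at hs
            omega
          obtain ⟨c, hc, hpc⟩ := ih u0 t (p ++ [0]) hsz ht hsub0
          exact ⟨c, hc, (List.prefix_append p [0]).trans hpc⟩

lemma exists_colS_prefix {t : CTree α} {p : List ℕ} {s : CTree α}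
    (ht : ∀ r, t.sub r ≠ some (node ([] : List (CTree α))))
    (hsub : t.sub p = some s) : ∃ c ∈ colS t, p <+: c :=
  exists_colS_prefix_aux (sizeOf s) s t p le_rfl ht hsub

lemma mem_MCfin {t : CTree α} {Y : Finset (List ℕ)} :
    Y ∈ MCfin t ↔ MinComplete t Y := by
  unfold MCfin
  simp only [Finset.mem_filter, Finset.mem_powerset]
  exact ⟨fun h => h.2, fun h => ⟨h.1, h⟩⟩

lemma no_nested {t : CTree α} {Y : Finset (List ℕ)}
    (ht : ∀ r, t.sub r ≠ some (node ([] : List (CTree α))))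
    (hY : MinComplete t Y) {d e : List ℕ} (hd : d ∈ Y) (he : e ∈ Y)
    (hpre : e <+: d) : e = d := by
  have hdE := hY.1 hd
  rw [mem_edgeS] at hdE
  obtain ⟨s, hs⟩ := Option.isSome_iff_exists.mp hdE.2
  obtain ⟨c, hc, hdc⟩ := exists_colS_prefix ht hs
  obtain ⟨d', hd', huniq⟩ := hY.2 c hc
  have h1 := huniq d ⟨hd, hdc⟩
  have h2 := huniq e ⟨he, hpre.trans hdc⟩
  rw [h1, h2]

/-- The characteristic function `χ_v(Y)`. -/
def chiv (Y : Finset (List ℕ)) (v : List ℕ) : ℤ :=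
  if ∃ d ∈ Y, v <+: d.dropLast then 1 else 0

lemma mem_sect {j : ℕ} {Y : Finset (List ℕ)} (hne : ∀ d ∈ Y, d ≠ []) {d' : List ℕ} :
    d' ∈ sect j Y ↔ j :: d' ∈ Y := by
  unfold sect
  simp only [Finset.mem_image, Finset.mem_filter]
  constructor
  · rintro ⟨d, ⟨hd, hh⟩, rfl⟩
    cases d with
    | nil => exact absurd rfl (hne _ hd)
    | cons a l =>
        simp only [List.head?_cons, Option.some.injEq] at hh
        subst hh
        exact hd
  · intro h
    exact ⟨j :: d', ⟨h, rfl⟩, rfl⟩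

lemma chiv_sect {j : ℕ} {Y : Finset (List ℕ)} (hne : ∀ d ∈ Y, d ≠ [])
    (hjY : [j] ∉ Y) (r : List ℕ) : chiv (sect j Y) r = chiv Y (j :: r) := by
  unfold chiv
  refine if_congr ?_ rfl rfl
  constructor
  · rintro ⟨d', hd', hr⟩
    have hmem : j :: d' ∈ Y := (mem_sect hne).mp hd'
    have hd'ne : d' ≠ [] := by
      rintro rfl; exact hjY hmem
    refine ⟨j :: d', hmem, ?_⟩
    rw [List.dropLast_cons_of_ne_nil hd'ne]
    exact List.cons_prefix_cons.mpr ⟨rfl, hr⟩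
  · rintro ⟨d, hd, hpre⟩
    cases d with
    | nil => exact absurd rfl (hne _ hd)
    | cons a l =>
        cases l with
        | nil =>
            simp only [List.dropLast_singleton, List.prefix_nil] at hpre
            exact absurd hpre (by simp)
        | cons b m =>
            rw [List.dropLast_cons_of_ne_nil (by simp)] at hpre
            obtain ⟨rfl, hr⟩ := List.cons_prefix_cons.mp hpre
            exact ⟨b :: m, (mem_sect hne).mpr hd, hr⟩

lemma colS_cons {ts : List (CTree α)} {j : ℕ} {c : CTree α}
    (hc : ts[j]? = some c) {p : List ℕ} :
    p ∈ colS c ↔ j :: p ∈ colS (node ts) := by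
  rw [mem_colS, mem_colS]
  simp only [sub_cons hc]

lemma uncS_cons {ts : List (CTree α)} {j : ℕ} {c : CTree α}
    (hc : ts[j]? = some c) {p : List ℕ} :
    p ∈ uncS c ↔ j :: p ∈ uncS (node ts) := by
  rw [mem_uncS, mem_uncS]
  simp only [sub_cons hc]

lemma sect_minComplete {ts : List (CTree α)} {j : ℕ} {c : CTree α}
    (hc : ts[j]? = some c) {Y : Finset (List ℕ)} (hY : MinComplete (node ts) Y)
    (hjY : [j] ∉ Y) : MinComplete c (sect j Y) := by
  have hne : ∀ d ∈ Y, d ≠ [] := fun d hd => (mem_edgeS.mp (hY.1 hd)).1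
  constructor
  · intro d' hd'
    have hmem : j :: d' ∈ Y := (mem_sect hne).mp hd'
    have hE := mem_edgeS.mp (hY.1 hmem)
    rw [sub_cons hc] at hE
    refine mem_edgeS.mpr ⟨?_, hE.2⟩
    rintro rfl
    exact hjY hmem
  · intro c' hc'
    have hcol : j :: c' ∈ colS (node ts) := (colS_cons hc).mp hc'
    obtain ⟨d, ⟨hdY, hdpre⟩, huniq⟩ := hY.2 (j :: c') hcol
    cases d with
    | nil => exact absurd rfl (hne _ hdY)
    | cons a l =>
        obtain ⟨rfl, hl⟩ := List.cons_prefix_cons.mp hdpre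
        refine ⟨l, ⟨(mem_sect hne).mpr hdY, hl⟩, ?_⟩
        intro y ⟨hy, hy'⟩
        have := huniq (a :: y) ⟨(mem_sect hne).mp hy, List.cons_prefix_cons.mpr ⟨rfl, hy'⟩⟩
        injection this

lemma vY_node (ts : List (CTree α)) (Y : Finset (List ℕ)) :
    vY (node ts) Y = e0 + ∑ i ∈ Finset.univ.filter (fun i : Fin ts.length => [i.1] ∉ Y),
        (shift i.1 (vY (ts.get i) (sect i.1 Y)) - e0) := by
  rw [vY]

lemma e0_nil : e0 ([] : List ℕ) = 1 := rfl

lemma e0_cons (j : ℕ) (q : List ℕ) : e0 (j :: q) = 0 := rfl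

lemma shift_nil (i : ℕ) (f : List ℕ → ℤ) : shift i f [] = 0 := rfl

lemma shift_cons (i j : ℕ) (f : List ℕ → ℤ) (q : List ℕ) :
    shift i f (j :: q) = if j = i then f q else 0 := rfl

lemma vY_node_nil (ts : List (CTree α)) (Y : Finset (List ℕ)) :
    vY (node ts) Y [] =
      1 - ((Finset.univ.filter (fun i : Fin ts.length => [i.1] ∉ Y)).card : ℤ) := by
  rw [vY_node]
  simp only [Pi.add_apply, Finset.sum_apply, Pi.sub_apply, e0_nil, shift_nil]
  rw [Finset.sum_congr rfl (fun i _ => by norm_num : ∀ i ∈ Finset.univ.filter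
      (fun i : Fin ts.length => [i.1] ∉ Y), (0 : ℤ) - 1 = -1)]
  rw [Finset.sum_const]
  simp
  ring

lemma vY_node_cons {ts : List (CTree α)} {j : ℕ} (hj : j < ts.length)
    (Y : Finset (List ℕ)) (q : List ℕ) :
    vY (node ts) Y (j :: q) =
      if [j] ∈ Y then 0 else vY (ts.get ⟨j, hj⟩) (sect j Y) q := by
  rw [vY_node]
  simp only [Pi.add_apply, Finset.sum_apply, Pi.sub_apply, e0_cons, shift_cons, sub_zero]
  have hrw : ∀ i : Fin ts.length,
      (if j = i.1 then vY (ts.get i) (sect i.1 Y) q else 0) =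
      (if i = ⟨j, hj⟩ then vY (ts.get i) (sect i.1 Y) q else 0) := by
    intro i
    refine if_congr ?_ rfl rfl
    constructor
    · intro h; exact Fin.ext h.symm
    · intro h; rw [h]
  rw [Finset.sum_congr rfl (fun i _ => hrw i), Finset.sum_ite_eq']
  simp only [Finset.mem_filter, Finset.mem_univ, true_and, zero_add]
  by_cases h : [j] ∈ Y <;> simp [h]

lemma chiv_zero_of_above {t : CTree α} {Y : Finset (List ℕ)}
    (ht : ∀ r, t.sub r ≠ some (node ([] : List (CTree α))))
    (hY : MinComplete t Y) {e : List ℕ} (he : e ∈ Y) {r : List ℕ} (her : e <+: r) :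
    chiv Y r = 0 := by
  unfold chiv
  rw [if_neg]
  rintro ⟨d, hd, hrd⟩
  have h1 : e <+: d.dropLast := her.trans hrd
  have h2 : e <+: d := h1.trans (List.dropLast_prefix d)
  have hene : e ≠ [] := (mem_edgeS.mp (hY.1 he)).1
  have hned : e ≠ d := by
    intro h
    subst h
    have hl1 := h1.length_le
    rw [List.length_dropLast] at hl1
    have : 1 ≤ e.length := by
      cases e with
      | nil => exact absurd rfl hene
      | cons a l => simp
    omega
  exact hned (no_nested ht hY hd he h2)

lemma vY_eq_chi_aux : ∀ (n : ℕ) (t : CTree α), sizeOf t ≤ n →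
    (∀ r, t.sub r ≠ some (node ([] : List (CTree α)))) →
    ∀ (Y : Finset (List ℕ)), MinComplete t Y → ∀ p ∈ uncS t,
    vY t Y p = chiv Y p -
      ∑ q ∈ (uncS t).filter (fun q => q ≠ [] ∧ q.dropLast = p), chiv Y q := by
  intro n
  induction n with
  | zero => intro t hst; have := one_le_sizeOf t; omega
  | succ n ih =>
      intro t hst ht Y hY p hp
      cases t with
      | leaf a =>
          obtain ⟨ts, hts⟩ := mem_uncS.mp hp
          cases p <;> simp [sub] at hts
      | node ts =>
          have hne : ∀ d ∈ Y, d ≠ [] := fun d hd => (mem_edgeS.mp (hY.1 hd)).1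
          have claimA : ∀ (i : ℕ) (a : α), ts[i]? = some (leaf a) → [i] ∈ Y := by
            intro i a hi
            have hcol : [i] ∈ colS (node ts) :=
              mem_colS.mpr ⟨a, by rw [sub_cons hi]; simp [sub]⟩
            obtain ⟨d, ⟨hdY, hdpre⟩, -⟩ := hY.2 [i] hcol
            have hdi : d = [i] := by
              cases d with
              | nil => exact absurd rfl (hne _ hdY)
              | cons b l =>
                  obtain ⟨rfl, hl⟩ := List.cons_prefix_cons.mp hdpre
                  simp only [List.prefix_nil] at hl
                  rw [hl]
            rwa [← hdi]
          have claimB : ∀ (i : ℕ) (us : List (CTree α)), ts[i]? = some (node us) →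
              chiv Y [i] = if [i] ∈ Y then 0 else 1 := by
            intro i us hi
            by_cases hiY : [i] ∈ Y
            · rw [if_pos hiY]
              exact chiv_zero_of_above ht hY hiY (List.prefix_refl _)
            · rw [if_neg hiY]
              have hsub : (node ts).sub [i] = some (node us) := by
                rw [sub_cons hi]; simp [sub]
              obtain ⟨c, hc, hic⟩ := exists_colS_prefix ht hsub
              obtain ⟨d, ⟨hdY, hdpre⟩, -⟩ := hY.2 c hc
              unfold chiv
              rw [if_pos]
              refine ⟨d, hdY, ?_⟩
              cases c with
              | nil =>
                  exfalso
                  simp only [List.prefix_nil] at hic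
                  simp at hic
              | cons b c' =>
                  obtain ⟨rfl, -⟩ := List.cons_prefix_cons.mp hic
                  cases d with
                  | nil => exact absurd rfl (hne _ hdY)
                  | cons b' l =>
                      obtain ⟨rfl, -⟩ := List.cons_prefix_cons.mp hdpre
                      have hlne : l ≠ [] := by rintro rfl; exact hiY hdY
                      rw [List.dropLast_cons_of_ne_nil hlne]
                      exact List.cons_prefix_cons.mpr ⟨rfl, List.nil_prefix⟩
          cases p with
          | nil =>
              rw [vY_node_nil]
              have hchinil : chiv Y [] = 1 := by
                unfold chiv
                rw [if_pos]
                obtain ⟨c, hc, -⟩ := exists_colS_prefix ht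
                  (show (node ts).sub [] = some (node ts) by simp [sub])
                obtain ⟨d, ⟨hdY, -⟩, -⟩ := hY.2 c hc
                exact ⟨d, hdY, List.nil_prefix⟩
              rw [hchinil]
              have himg : (uncS (node ts)).filter (fun q => q ≠ [] ∧ q.dropLast = []) =
                  (Finset.univ.filter
                    (fun i : Fin ts.length => ∃ us, ts[i.1]? = some (node us))).image
                    (fun i => [i.1]) := by
                ext q
                simp only [Finset.mem_filter, Finset.mem_image, Finset.mem_univ, true_and]
                constructor
                · rintro ⟨hq, hqne, hqd⟩
                  obtain ⟨x, rfl⟩ : ∃ x, q = [x] := by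
                    cases q with
                    | nil => exact absurd rfl hqne
                    | cons x l =>
                        cases l with
                        | nil => exact ⟨x, rfl⟩
                        | cons y m =>
                            rw [List.dropLast_cons_of_ne_nil (by simp)] at hqd
                            simp at hqd
                  obtain ⟨us, hus⟩ := mem_uncS.mp hq
                  obtain ⟨c0, hc0⟩ : ∃ c0, ts[x]? = some c0 := by
                    rcases h : ts[x]? with _ | c
                    · have h2 : (node ts).sub [x] = none := by simp [sub, h]
                      rw [h2] at hus
                      exact absurd hus (by simp)
                    · exact ⟨c, rfl⟩
                  have hx : x < ts.length := (List.getElem?_eq_some_iff.mp hc0).1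
                  refine ⟨⟨x, hx⟩, ⟨us, ?_⟩, rfl⟩
                  rw [hc0]
                  rw [sub_cons hc0] at hus
                  cases c0 with
                  | leaf a => simp [sub] at hus
                  | node ws => simp [sub] at hus; rw [hus]
                · rintro ⟨i, ⟨us, hus⟩, rfl⟩
                  refine ⟨mem_uncS.mpr ⟨us, by rw [sub_cons hus]; simp [sub]⟩, by simp, by simp⟩
              rw [himg, Finset.sum_image (by intro x _ y _ h; exact Fin.ext (by injection h))]
              have hsum : ∑ i ∈ Finset.univ.filter
                    (fun i : Fin ts.length => ∃ us, ts[i.1]? = some (node us)),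
                    chiv Y [i.1]
                  = ∑ i ∈ Finset.univ.filter
                    (fun i : Fin ts.length => ∃ us, ts[i.1]? = some (node us)),
                    (if [i.1] ∉ Y then (1 : ℤ) else 0) := by
                refine Finset.sum_congr rfl ?_
                intro i hi
                simp only [Finset.mem_filter, Finset.mem_univ, true_and] at hi
                obtain ⟨us, hus⟩ := hi
                rw [claimB i.1 us hus]
                by_cases h : [i.1] ∈ Y <;> simp [h]
              rw [hsum, Finset.sum_boole]
              have hset : (Finset.univ.filter
                    (fun i : Fin ts.length => ∃ us, ts[i.1]? = some (node us))).filter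
                    (fun i => [i.1] ∉ Y)
                  = Finset.univ.filter (fun i : Fin ts.length => [i.1] ∉ Y) := by
                ext i
                simp only [Finset.mem_filter, Finset.mem_univ, true_and]
                constructor
                · rintro ⟨-, h⟩; exact h
                · intro h
                  refine ⟨?_, h⟩
                  have hi : ts[i.1]? = some ts[i.1] := List.getElem?_eq_getElem i.2
                  cases hcase : ts[i.1] with
                  | leaf a => exact absurd (claimA i.1 a (by rw [hi, hcase])) h
                  | node us => exact ⟨us, by rw [hi, hcase]⟩
              rw [hset]
          | cons j q =>
              obtain ⟨vs, hvs⟩ := mem_uncS.mp hp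
              obtain ⟨c0, hc0⟩ : ∃ c0, ts[j]? = some c0 := by
                rcases h : ts[j]? with _ | c
                · have h2 : (node ts).sub (j :: q) = none := by simp [sub, h]
                  rw [h2] at hvs
                  exact absurd hvs (by simp)
                · exact ⟨c, rfl⟩
              have hj : j < ts.length := (List.getElem?_eq_some_iff.mp hc0).1
              have hsubc : c0.sub q = some (node vs) := by rw [← sub_cons hc0]; exact hvs
              rw [vY_node_cons hj]
              by_cases hjY : [j] ∈ Y
              · rw [if_pos hjY]
                have hchi0 : ∀ r : List ℕ, [j] <+: r → chiv Y r = 0 := fun r hr =>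
                  chiv_zero_of_above ht hY hjY hr
                rw [hchi0 (j :: q) (List.cons_prefix_cons.mpr ⟨rfl, List.nil_prefix⟩)]
                rw [Finset.sum_eq_zero]
                · ring
                · intro x hx
                  simp only [Finset.mem_filter] at hx
                  obtain ⟨-, hxne, hxd⟩ := hx
                  refine hchi0 x ?_
                  calc [j] <+: j :: q := List.cons_prefix_cons.mpr ⟨rfl, List.nil_prefix⟩
                    _ = x.dropLast := hxd.symm
                    _ <+: x := List.dropLast_prefix x
              · rw [if_neg hjY]
                have hget : ts.get ⟨j, hj⟩ = c0 := by
                  rw [List.get_eq_getElem]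
                  exact (List.getElem?_eq_some_iff.mp hc0).2
                obtain ⟨us, rfl⟩ : ∃ us, c0 = node us := by
                  cases c0 with
                  | leaf a => exfalso; cases q <;> simp [sub] at hsubc
                  | node us => exact ⟨us, rfl⟩
                have htc : ∀ r, (node us).sub r ≠ some (node ([] : List (CTree α))) := by
                  intro r h
                  exact ht (j :: r) (by rw [sub_cons hc0]; exact h)
                have hYc : MinComplete (node us) (sect j Y) := sect_minComplete hc0 hY hjY
                have hszc : sizeOf (node us) ≤ n := by
                  have hmem : node us ∈ ts := by
                    obtain ⟨h', he⟩ := List.getElem?_eq_some_iff.mp hc0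
                    rw [← he]
                    exact List.getElem_mem _
                  have := List.sizeOf_lt_of_mem hmem
                  simp only [CTree.node.sizeOf_spec] at hst
                  omega
                have hq : q ∈ uncS (node us) := mem_uncS.mpr ⟨vs, hsubc⟩
                rw [hget, ih (node us) hszc htc (sect j Y) hYc q hq]
                rw [chiv_sect hne hjY q]
                have himg : (uncS (node ts)).filter
                      (fun q' => q' ≠ [] ∧ q'.dropLast = j :: q)
                    = ((uncS (node us)).filter (fun r => r ≠ [] ∧ r.dropLast = q)).image
                        (j :: ·) := by
                  ext q'
                  simp only [Finset.mem_filter, Finset.mem_image]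
                  constructor
                  · rintro ⟨hq', hq'ne, hq'd⟩
                    cases q' with
                    | nil => exact absurd rfl hq'ne
                    | cons b r =>
                        have hrne : r ≠ [] := by rintro rfl; simp at hq'd
                        rw [List.dropLast_cons_of_ne_nil hrne] at hq'd
                        obtain ⟨rfl, hrd⟩ : b = j ∧ r.dropLast = q := by
                          constructor <;> injection hq'd
                        exact ⟨r, ⟨(uncS_cons hc0).mpr hq', hrne, hrd⟩, rfl⟩
                  · rintro ⟨r, ⟨hr, hrne, hrd⟩, rfl⟩
                    refine ⟨(uncS_cons hc0).mp hr, by simp, ?_⟩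
                    rw [List.dropLast_cons_of_ne_nil hrne, hrd]
                rw [himg, Finset.sum_image (by intro x _ y _ h; injection h)]
                congr 1
                exact Finset.sum_congr rfl (fun r _ => chiv_sect hne hjY r)

lemma vY_eq_chi {t : CTree α} (ht : ∀ r, t.sub r ≠ some (node ([] : List (CTree α))))
    {Y : Finset (List ℕ)} (hY : MinComplete t Y) {p : List ℕ} (hp : p ∈ uncS t) :
    vY t Y p = chiv Y p -
      ∑ q ∈ (uncS t).filter (fun q => q ≠ [] ∧ q.dropLast = p), chiv Y q :=
  vY_eq_chi_aux (sizeOf t) t le_rfl ht Y hY p hp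

lemma telescope {t : CTree α} {v : List ℕ} (hv : v ∈ uncS t) (f : List ℕ → ℤ) :
    ∑ p ∈ (uncS t).filter (v <+: ·),
      (f p - ∑ q ∈ (uncS t).filter (fun q => q ≠ [] ∧ q.dropLast = p), f q) = f v := by
  set D := (uncS t).filter (v <+: ·) with hD
  have hvD : v ∈ D := Finset.mem_filter.mpr ⟨hv, List.prefix_refl v⟩
  have hbi : D.biUnion (fun p => (uncS t).filter (fun q => q ≠ [] ∧ q.dropLast = p))
      = D.erase v := by
    ext w
    simp only [Finset.mem_biUnion, Finset.mem_erase, hD, Finset.mem_filter]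
    constructor
    · rintro ⟨p, hpD, hw, hwne, hwd⟩
      obtain ⟨hpu, hvp⟩ := hpD
      have hvw : v <+: w := hvp.trans (hwd ▸ List.dropLast_prefix w)
      refine ⟨?_, hw, hvw⟩
      rintro rfl
      have h1 := hvp.length_le
      rw [← hwd] at h1
      rw [List.length_dropLast] at h1
      have : 1 ≤ w.length := by
        cases w with
        | nil => exact absurd rfl hwne
        | cons a l => simp
      omega
    · rintro ⟨hwv, hw, hvw⟩
      have hwne : w ≠ [] := by
        rintro rfl
        simp only [List.prefix_nil] at hvw
        exact hwv hvw.symm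
      exact ⟨w.dropLast, ⟨parent_mem_uncS hw hwne,
        prefix_dropLast_of_proper hvw (Ne.symm hwv)⟩, hw, hwne, rfl⟩
  have hdisj : (↑D : Set (List ℕ)).PairwiseDisjoint
      (fun p => (uncS t).filter (fun q => q ≠ [] ∧ q.dropLast = p)) := by
    intro p1 _ p2 _ hne12
    refine Finset.disjoint_left.mpr ?_
    intro q hq1 hq2
    obtain ⟨-, -, h1⟩ := Finset.mem_filter.mp hq1
    obtain ⟨-, -, h2⟩ := Finset.mem_filter.mp hq2
    exact absurd (by rw [← h1, ← h2]) hne12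
  rw [Finset.sum_sub_distrib, ← Finset.sum_biUnion hdisj, hbi]
  have := Finset.add_sum_erase D f hvD
  linarith

lemma chi_eq_pair {t : CTree α}
    (ht : ∀ r, t.sub r ≠ some (node ([] : List (CTree α))))
    {Y : Finset (List ℕ)} (hY : MinComplete t Y) {v : List ℕ} (hv : v ∈ uncS t) :
    pairZ t (sv t v) (vY t Y) = chiv Y v := by
  unfold pairZ
  have h1 : ∀ p ∈ uncS t, sv t v p * vY t Y p = if v <+: p then vY t Y p else 0 := by
    intro p hp
    unfold sv
    by_cases h : v <+: p
    · rw [if_pos ⟨hp, h⟩, if_pos h, one_mul]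
    · rw [if_neg (fun hc => h hc.2), if_neg h, zero_mul]
  rw [Finset.sum_congr rfl h1, ← Finset.sum_filter]
  rw [Finset.sum_congr rfl
    (fun p hp => vY_eq_chi ht hY (Finset.mem_filter.mp hp).1)]
  exact telescope hv (chiv Y)

lemma pairZ_add (t : CTree α) (u w x : List ℕ → ℤ) :
    pairZ t (u + w) x = pairZ t u x + pairZ t w x := by
  unfold pairZ
  rw [← Finset.sum_add_distrib]
  exact Finset.sum_congr rfl (fun p _ => by simp [add_mul])

lemma pairZ_neg (t : CTree α) (u x : List ℕ → ℤ) :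
    pairZ t (-u) x = -pairZ t u x := by
  unfold pairZ
  rw [← Finset.sum_neg_distrib]
  exact Finset.sum_congr rfl (fun p _ => by simp)

end Aux

end CTree

/-- The subgroup of `ℤ^{MC(Γ)}` consisting of the functions
`Y ↦ ⟨u, v_Y⟩`, `u ∈ M`, equals the subgroup generated by the `g` functions `χ_v`
(`v` uncolored), where `χ_v(Y) = 1` if `Y` contains an edge of the subtree rooted at
`v`, and `χ_v(Y) = 0` otherwise. -/
theorem pairing_vY_subgroup_eq_closure_chi {α : Type} (t : CTree α)
    (ht : t.IsColoredTree) :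
    {f : {Y // Y ∈ CTree.MCfin t} → ℤ |
        ∃ u : List ℕ → ℤ, ∀ Y : {Y // Y ∈ CTree.MCfin t},
          f Y = CTree.pairZ t u (CTree.vY t Y.1)} =
      ↑(AddSubgroup.closure
        {f : {Y // Y ∈ CTree.MCfin t} → ℤ |
          ∃ v ∈ CTree.uncS t, f = fun Y =>
            if ∃ d ∈ Y.1, v <+: d.dropLast then (1 : ℤ) else 0}) := by
  classical
  obtain ⟨htne, -⟩ := ht
  set S : Set ({Y // Y ∈ CTree.MCfin t} → ℤ) :=
    {f : {Y // Y ∈ CTree.MCfin t} → ℤ |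
      ∃ v ∈ CTree.uncS t, f = fun Y =>
        if ∃ d ∈ Y.1, v <+: d.dropLast then (1 : ℤ) else 0} with hS
  have hmemG : ∀ r ∈ CTree.uncS t,
      (fun Y : {Y // Y ∈ CTree.MCfin t} => CTree.chiv Y.1 r) ∈
        AddSubgroup.closure S := by
    intro r hr
    apply AddSubgroup.subset_closure
    exact ⟨r, hr, rfl⟩
  apply Set.Subset.antisymm
  · rintro f ⟨u, hu⟩
    have hf : f = ∑ p ∈ CTree.uncS t, u p •
        ((fun Y : {Y // Y ∈ CTree.MCfin t} => CTree.chiv Y.1 p) -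
          ∑ q ∈ (CTree.uncS t).filter (fun q => q ≠ [] ∧ q.dropLast = p),
            (fun Y : {Y // Y ∈ CTree.MCfin t} => CTree.chiv Y.1 q)) := by
      funext Y
      rw [hu Y]
      unfold CTree.pairZ
      rw [Finset.sum_apply]
      refine Finset.sum_congr rfl ?_
      intro p hp
      have hvy := CTree.vY_eq_chi htne (CTree.mem_MCfin.mp Y.2) hp
      simp only [Pi.smul_apply, Pi.sub_apply, Finset.sum_apply, smul_eq_mul]
      rw [hvy]
    rw [hf]
    simp only [SetLike.mem_coe]
    apply AddSubgroup.sum_mem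
    intro p hp
    apply AddSubgroup.zsmul_mem
    apply AddSubgroup.sub_mem
    · exact hmemG p hp
    · apply AddSubgroup.sum_mem
      intro q hq
      exact hmemG q (Finset.mem_filter.mp hq).1
  · set P : AddSubgroup ({Y // Y ∈ CTree.MCfin t} → ℤ) :=
      { carrier := {f : {Y // Y ∈ CTree.MCfin t} → ℤ |
          ∃ u : List ℕ → ℤ, ∀ Y : {Y // Y ∈ CTree.MCfin t},
            f Y = CTree.pairZ t u (CTree.vY t Y.1)}
        zero_mem' := ⟨0, fun Y => by simp [CTree.pairZ]⟩
        add_mem' := by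
          rintro f g ⟨u, hu⟩ ⟨w, hw⟩
          exact ⟨u + w, fun Y => by
            rw [Pi.add_apply, hu Y, hw Y, CTree.pairZ_add]⟩
        neg_mem' := by
          rintro f ⟨u, hu⟩
          exact ⟨-u, fun Y => by rw [Pi.neg_apply, hu Y, CTree.pairZ_neg]⟩ } with hP
    have hsub : S ⊆ ↑P := by
      rintro f ⟨v, hv, rfl⟩
      exact ⟨CTree.sv t v, fun Y =>
        (CTree.chi_eq_pair htne (CTree.mem_MCfin.mp Y.2) hv).symm⟩
    intro f hf
    exact (AddSubgroup.closure_le P).mpr hsub hf
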